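/- Let G₁ and G₂ be graphs on n₁ and n₂ vertices respectively, and let k₁, k₂ be natural numbers with n₁ − k₁ = n₂ − k₂. If the graphs obtained from G₁ and G₂ by deleting all universal vertices are isomorphic, then B_{≥k₁}(G₁) is isomorphic to B_{≥k₂}(G₂). -/

import Mathlib

open Finset

variable {V : Type*} [Fintype V] [DecidableEq V]

def IsISP (G : SimpleGraph V) (P : Finpartition (univ : Finset V)) : Prop :=
  ∀ A ∈ P.parts, ∀ u ∈ A, ∀ v ∈ A, ¬ G.Adj u v

def samePart (P : Finpartition (univ : Finset V)) (u v : V) : Prop :=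
  ∃ A ∈ P.parts, u ∈ A ∧ v ∈ A

def MovedBy (P Q : Finpartition (univ : Finset V)) (x : V) : Prop :=
  P ≠ Q ∧ ∀ u v : V, u ≠ x → v ≠ x → (samePart P u v ↔ samePart Q u v)

def BellGraph (G : SimpleGraph V) :
    SimpleGraph {P : Finpartition (univ : Finset V) // IsISP G P} where
  Adj P Q := ∃ x, MovedBy P.1 Q.1 x
  symm := by
    constructor
    rintro P Q ⟨x, hne, h⟩
    exact ⟨x, Ne.symm hne, fun u v hu hv => (h u v hu hv).symm⟩
  loopless := by
    constructor
    rintro P ⟨x, hne, _⟩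
    exact hne rfl

def UpperBell (G : SimpleGraph V) (k : ℕ) :
    SimpleGraph {P : Finpartition (univ : Finset V) // IsISP G P ∧ k ≤ P.parts.card} where
  Adj P Q := ∃ x, MovedBy P.1 Q.1 x
  symm := by
    constructor
    rintro P Q ⟨x, hne, h⟩
    exact ⟨x, Ne.symm hne, fun u v hu hv => (h u v hu hv).symm⟩
  loopless := by
    constructor
    rintro P ⟨x, hne, _⟩
    exact hne rfl

def IsUniversal (G : SimpleGraph V) (v : V) : Prop :=
  ∀ w, w ≠ v → G.Adj v w

open scoped Classical

/-! ### Basic lemmas about `samePart` -/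

lemma samePart_iff {P : Finpartition (univ : Finset V)} {u v : V} :
    samePart P u v ↔ v ∈ P.part u := by
  constructor
  · rintro ⟨A, hA, hu, hv⟩
    rwa [P.part_eq_of_mem hA hu]
  · intro h
    exact ⟨P.part u, P.part_mem.2 (mem_univ u), P.mem_part (mem_univ u), h⟩

lemma samePart_self (P : Finpartition (univ : Finset V)) (u : V) : samePart P u u :=
  samePart_iff.2 (P.mem_part (mem_univ u))

lemma samePart_symm {P : Finpartition (univ : Finset V)} {u v : V}
    (h : samePart P u v) : samePart P v u := by
  obtain ⟨A, hA, hu, hv⟩ := h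
  exact ⟨A, hA, hv, hu⟩

lemma samePart_trans {P : Finpartition (univ : Finset V)} {u v w : V}
    (h1 : samePart P u v) (h2 : samePart P v w) : samePart P u w := by
  obtain ⟨A, hA, hu, hv⟩ := h1
  obtain ⟨B, hB, hv', hw⟩ := h2
  exact ⟨A, hA, hu, (P.eq_of_mem_parts hA hB hv hv') ▸ hw⟩

lemma part_eq_part_iff {P : Finpartition (univ : Finset V)} {u v : V} :
    P.part u = P.part v ↔ samePart P u v := by
  constructor
  · intro h
    exact samePart_iff.2 (h ▸ P.mem_part (mem_univ v))
  · intro h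
    obtain ⟨A, hA, hu, hv⟩ := h
    rw [P.part_eq_of_mem hA hu, P.part_eq_of_mem hA hv]

lemma finpartition_eq_of_samePart {P Q : Finpartition (univ : Finset V)}
    (h : ∀ u v, samePart P u v ↔ samePart Q u v) : P = Q := by
  have key : ∀ P Q : Finpartition (univ : Finset V),
      (∀ u v, samePart P u v ↔ samePart Q u v) → P.parts ⊆ Q.parts := by
    intro P Q h A hA
    obtain ⟨a, ha⟩ := P.nonempty_of_mem_parts hA
    have : A = Q.part a := by
      ext x
      rw [← samePart_iff]
      rw [← h a x]
      constructor
      · intro hx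
        exact ⟨A, hA, ha, hx⟩
      · rintro ⟨B, hB, haB, hxB⟩
        rwa [P.eq_of_mem_parts hA hB ha haB]
    rw [this]
    exact Q.part_mem.2 (mem_univ a)
  exact Finpartition.ext (le_antisymm (key P Q h) (key Q P fun u v => (h u v).symm))

/-! ### Universal vertices -/

lemma samePart_universal {G : SimpleGraph V} {P : Finpartition (univ : Finset V)}
    (hP : IsISP G P) {u : V} (hu : IsUniversal G u) {v : V} :
    samePart P u v ↔ v = u := by
  constructor
  · rintro ⟨A, hA, huA, hvA⟩
    by_contra hv
    exact hP A hA u huA v hvA (hu v hv)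
  · rintro rfl
    exact samePart_self P v

lemma part_of_universal {G : SimpleGraph V} {P : Finpartition (univ : Finset V)}
    (hP : IsISP G P) {u : V} (hu : IsUniversal G u) : P.part u = {u} := by
  ext x
  rw [← samePart_iff, samePart_universal hP hu, mem_singleton]

noncomputable def uniCard (G : SimpleGraph V) : ℕ :=
  (univ.filter fun v => IsUniversal G v).card

lemma card_parts_decomp {G : SimpleGraph V} {P : Finpartition (univ : Finset V)}
    (hP : IsISP G P) :
    P.parts.card
      = uniCard G + ((univ.filter fun v => ¬ IsUniversal G v).image P.part).card := by
  set S : Finset (Finset V) :=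
    (univ.filter fun v => IsUniversal G v).image (fun u => ({u} : Finset V)) with hS
  set C : Finset (Finset V) := (univ.filter fun v => ¬ IsUniversal G v).image P.part with hC
  have hparts : P.parts = S ∪ C := by
    ext A
    constructor
    · intro hA
      by_cases hex : ∃ u ∈ A, IsUniversal G u
      · obtain ⟨u, huA, hu⟩ := hex
        apply mem_union_left
        rw [hS, mem_image]
        refine ⟨u, by simp [hu], ?_⟩
        rw [← part_of_universal hP hu, P.part_eq_of_mem hA huA]
      · push_neg at hex
        obtain ⟨a, ha⟩ := P.nonempty_of_mem_parts hA
        apply mem_union_right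
        rw [hC, mem_image]
        exact ⟨a, by simp [hex a ha], (P.part_eq_of_mem hA ha)⟩
    · intro hA
      rcases mem_union.1 hA with hA | hA
      · rw [hS, mem_image] at hA
        obtain ⟨u, hu, rfl⟩ := hA
        simp only [mem_filter] at hu
        rw [← part_of_universal hP hu.2]
        exact P.part_mem.2 (mem_univ u)
      · rw [hC, mem_image] at hA
        obtain ⟨a, _, rfl⟩ := hA
        exact P.part_mem.2 (mem_univ a)
  have hdisj : Disjoint S C := by
    rw [Finset.disjoint_left]
    rintro B hBS hBC
    rw [hS, mem_image] at hBS
    obtain ⟨u, hu, rfl⟩ := hBS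
    simp only [mem_filter] at hu
    rw [hC, mem_image] at hBC
    obtain ⟨a, ha, hpa⟩ := hBC
    simp only [mem_filter] at ha
    have haa : a ∈ P.part a := P.mem_part (mem_univ a)
    rw [hpa, mem_singleton] at haa
    exact ha.2 (haa ▸ hu.2)
  have hcardS : S.card = uniCard G := by
    rw [hS, uniCard]
    exact Finset.card_image_of_injective _ Finset.singleton_injective
  rw [hparts, card_union_of_disjoint hdisj, hcardS]

/-- If two maps have the same fibers on `s`, their images of `s` have the same size. -/
lemma card_image_eq_of_fiber_iff {α β γ : Type*} [DecidableEq β] [DecidableEq γ]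
    (s : Finset α) (f : α → β) (g : α → γ)
    (h : ∀ a ∈ s, ∀ b ∈ s, (f a = f b ↔ g a = g b)) :
    (s.image f).card = (s.image g).card := by
  apply Finset.card_bij (fun b hb => g ((Finset.mem_image.1 hb).choose))
  · intro b hb
    have spec := (Finset.mem_image.1 hb).choose_spec
    exact Finset.mem_image.2 ⟨_, spec.1, rfl⟩
  · intro b₁ hb₁ b₂ hb₂ heq
    have s₁ := (Finset.mem_image.1 hb₁).choose_spec
    have s₂ := (Finset.mem_image.1 hb₂).choose_spec
    rw [← s₁.2, ← s₂.2]
    exact (h _ s₁.1 _ s₂.1).2 heq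
  · intro c hc
    obtain ⟨a, ha, rfl⟩ := Finset.mem_image.1 hc
    have hfa : f a ∈ s.image f := Finset.mem_image.2 ⟨a, ha, rfl⟩
    refine ⟨f a, hfa, ?_⟩
    have spec := (Finset.mem_image.1 hfa).choose_spec
    exact (h _ spec.1 _ ha).1 spec.2

/-! ### Transferring partitions along an isomorphism of the non-universal parts -/

section Transfer

variable {V₁ V₂ : Type*} [Fintype V₁] [DecidableEq V₁] [Fintype V₂] [DecidableEq V₂]
  {G₁ : SimpleGraph V₁} {G₂ : SimpleGraph V₂}

def tRel (e : (SimpleGraph.induce {v : V₁ | ¬ IsUniversal G₁ v} G₁) ≃g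
      (SimpleGraph.induce {v : V₂ | ¬ IsUniversal G₂ v} G₂))
    (P : Finpartition (univ : Finset V₁)) (v w : V₂) : Prop :=
  v = w ∨ ∃ (hv : v ∈ {v : V₂ | ¬ IsUniversal G₂ v}) (hw : w ∈ {v : V₂ | ¬ IsUniversal G₂ v}),
    samePart P (↑(e.symm ⟨v, hv⟩)) (↑(e.symm ⟨w, hw⟩))

def tSetoid (e : (SimpleGraph.induce {v : V₁ | ¬ IsUniversal G₁ v} G₁) ≃g
      (SimpleGraph.induce {v : V₂ | ¬ IsUniversal G₂ v} G₂))
    (P : Finpartition (univ : Finset V₁)) : Setoid V₂ where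
  r := tRel e P
  iseqv := by
    constructor
    · intro v; exact Or.inl rfl
    · rintro v w (rfl | ⟨hv, hw, h⟩)
      · exact Or.inl rfl
      · exact Or.inr ⟨hw, hv, samePart_symm h⟩
    · rintro u v w (rfl | ⟨hu, hv, h1⟩) h2
      · exact h2
      · rcases h2 with rfl | ⟨hv', hw, h2⟩
        · exact Or.inr ⟨hu, hv, h1⟩
        · exact Or.inr ⟨hu, hw, samePart_trans h1 h2⟩

noncomputable def transfer
    (e : (SimpleGraph.induce {v : V₁ | ¬ IsUniversal G₁ v} G₁) ≃g
      (SimpleGraph.induce {v : V₂ | ¬ IsUniversal G₂ v} G₂))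
    (P : Finpartition (univ : Finset V₁)) : Finpartition (univ : Finset V₂) :=
  Finpartition.ofSetoid (tSetoid e P)

variable (e : (SimpleGraph.induce {v : V₁ | ¬ IsUniversal G₁ v} G₁) ≃g
      (SimpleGraph.induce {v : V₂ | ¬ IsUniversal G₂ v} G₂))
  (P : Finpartition (univ : Finset V₁))

lemma samePart_transfer {v w : V₂} :
    samePart (transfer e P) v w ↔ tRel e P v w := by
  rw [samePart_iff, transfer]
  exact Finpartition.mem_part_ofSetoid_iff_rel

lemma tRel_apply (a b : {v : V₁ | ¬ IsUniversal G₁ v}) :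
    tRel e P (↑(e a)) (↑(e b)) ↔ samePart P ↑a ↑b := by
  unfold tRel
  constructor
  · rintro (h | ⟨hv, hw, h⟩)
    · have : e a = e b := Subtype.ext h
      rw [e.toEquiv.injective this]
      exact samePart_self P _
    · have h1 : (⟨↑(e a), hv⟩ : {v : V₂ | ¬ IsUniversal G₂ v}) = e a := rfl
      have h2 : (⟨↑(e b), hw⟩ : {v : V₂ | ¬ IsUniversal G₂ v}) = e b := rfl
      rw [h1, h2, e.symm_apply_apply, e.symm_apply_apply] at h
      exact h
  · intro h
    refine Or.inr ⟨(e a).2, (e b).2, ?_⟩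
    have h1 : (⟨↑(e a), (e a).2⟩ : {v : V₂ | ¬ IsUniversal G₂ v}) = e a := rfl
    have h2 : (⟨↑(e b), (e b).2⟩ : {v : V₂ | ¬ IsUniversal G₂ v}) = e b := rfl
    rw [h1, h2, e.symm_apply_apply, e.symm_apply_apply]
    exact h

lemma isISP_transfer (hP : IsISP G₁ P) : IsISP G₂ (transfer e P) := by
  intro A hA u huA v hvA hadj
  have hsp : samePart (transfer e P) u v := ⟨A, hA, huA, hvA⟩
  rw [samePart_transfer] at hsp
  rcases hsp with rfl | ⟨hu, hv, h⟩
  · exact G₂.loopless.irrefl u hadj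
  · obtain ⟨B, hB, h1, h2⟩ := h
    apply hP B hB _ h1 _ h2
    have : (SimpleGraph.induce {v : V₂ | ¬ IsUniversal G₂ v} G₂).Adj ⟨u, hu⟩ ⟨v, hv⟩ := hadj
    rw [← e.symm.map_rel_iff] at this
    exact this

lemma transfer_transfer (hP : IsISP G₁ P) : transfer e.symm (transfer e P) = P := by
  apply finpartition_eq_of_samePart
  intro u v
  rw [samePart_transfer]
  unfold tRel
  constructor
  · rintro (rfl | ⟨hu, hv, h⟩)
    · exact samePart_self P u
    · have hss : e.symm.symm = e := rfl
      rw [hss, samePart_transfer, tRel_apply e P ⟨u, hu⟩ ⟨v, hv⟩] at h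
      exact h
  · intro h
    by_cases huv : u = v
    · exact Or.inl huv
    · have hu : ¬ IsUniversal G₁ u := by
        intro hcon
        exact huv ((samePart_universal hP hcon).1 h).symm
      have hv : ¬ IsUniversal G₁ v := by
        intro hcon
        exact huv ((samePart_universal hP hcon).1 (samePart_symm h))
      refine Or.inr ⟨hu, hv, ?_⟩
      have hss : e.symm.symm = e := rfl
      rw [hss, samePart_transfer, tRel_apply e P ⟨u, hu⟩ ⟨v, hv⟩]
      exact h

lemma movedBy_transfer {Q : Finpartition (univ : Finset V₁)}
    (hP : IsISP G₁ P) (hQ : IsISP G₁ Q) {x : V₁} (hx : MovedBy P Q x) :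
    ∃ y, MovedBy (transfer e P) (transfer e Q) y := by
  have hxu : ¬ IsUniversal G₁ x := by
    intro hu
    apply hx.1
    apply finpartition_eq_of_samePart
    intro u v
    by_cases hux : u = x
    · subst hux
      rw [samePart_universal hP hu, samePart_universal hQ hu]
    · by_cases hvx : v = x
      · subst hvx
        constructor
        · intro h
          exact samePart_symm ((samePart_universal hQ hu).2
            ((samePart_universal hP hu).1 (samePart_symm h)))
        · intro h
          exact samePart_symm ((samePart_universal hP hu).2
            ((samePart_universal hQ hu).1 (samePart_symm h)))
      · exact hx.2 u v hux hvx
  refine ⟨↑(e ⟨x, hxu⟩), ?_, ?_⟩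
  · intro hcon
    apply hx.1
    rw [← transfer_transfer e P hP, ← transfer_transfer e Q hQ, hcon]
  · intro u v hu hv
    rw [samePart_transfer, samePart_transfer]
    unfold tRel
    constructor
    · rintro (rfl | ⟨h1, h2, h⟩)
      · exact Or.inl rfl
      · refine Or.inr ⟨h1, h2, ?_⟩
        rw [← hx.2]
        · exact h
        · intro hcon
          apply hu
          have : e.symm ⟨u, h1⟩ = ⟨x, hxu⟩ := Subtype.ext hcon
          have := congrArg (fun z => (↑(e z) : V₂)) this
          rwa [RelIso.apply_symm_apply] at this
        · intro hcon
          apply hv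
          have : e.symm ⟨v, h2⟩ = ⟨x, hxu⟩ := Subtype.ext hcon
          have := congrArg (fun z => (↑(e z) : V₂)) this
          rwa [RelIso.apply_symm_apply] at this
    · rintro (rfl | ⟨h1, h2, h⟩)
      · exact Or.inl rfl
      · refine Or.inr ⟨h1, h2, ?_⟩
        rw [hx.2]
        · exact h
        · intro hcon
          apply hu
          have : e.symm ⟨u, h1⟩ = ⟨x, hxu⟩ := Subtype.ext hcon
          have := congrArg (fun z => (↑(e z) : V₂)) this
          rwa [RelIso.apply_symm_apply] at this
        · intro hcon
          apply hv
          have : e.symm ⟨v, h2⟩ = ⟨x, hxu⟩ := Subtype.ext hcon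
          have := congrArg (fun z => (↑(e z) : V₂)) this
          rwa [RelIso.apply_symm_apply] at this

lemma transfer_parts_card (hP : IsISP G₁ P) :
    (transfer e P).parts.card + uniCard G₁ = P.parts.card + uniCard G₂ := by
  rw [card_parts_decomp hP, card_parts_decomp (isISP_transfer e P hP)]
  have key : ((univ.filter fun v => ¬ IsUniversal G₂ v).image (transfer e P).part).card
      = ((univ.filter fun v => ¬ IsUniversal G₁ v).image P.part).card := by
    set g : V₁ → Finset V₂ := fun a =>
      if h : ¬ IsUniversal G₁ a then (transfer e P).part ↑(e ⟨a, h⟩) else ∅ with hg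
    have himg : (univ.filter fun v => ¬ IsUniversal G₂ v).image (transfer e P).part
        = (univ.filter fun v => ¬ IsUniversal G₁ v).image g := by
      ext B
      simp only [mem_image, mem_filter, mem_univ, true_and]
      constructor
      · rintro ⟨v, hv, rfl⟩
        refine ⟨↑(e.symm ⟨v, hv⟩), (e.symm ⟨v, hv⟩).2, ?_⟩
        simp only [hg]
        rw [dif_pos (show ¬ IsUniversal G₁ ↑(e.symm ⟨v, hv⟩) from (e.symm ⟨v, hv⟩).2)]
        rw [show (⟨↑(e.symm ⟨v, hv⟩), (e.symm ⟨v, hv⟩).2⟩ :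
          {v : V₁ | ¬ IsUniversal G₁ v}) = e.symm ⟨v, hv⟩ from rfl]
        rw [RelIso.apply_symm_apply]
      · rintro ⟨a, ha, rfl⟩
        simp only [hg]
        rw [dif_pos ha]
        exact ⟨↑(e ⟨a, ha⟩), (e ⟨a, ha⟩).2, rfl⟩
    rw [himg]
    apply card_image_eq_of_fiber_iff
    intro a ha b hb
    simp only [mem_filter, mem_univ, true_and] at ha hb
    simp only [hg]
    rw [dif_pos ha, dif_pos hb]
    rw [part_eq_part_iff, part_eq_part_iff, samePart_transfer, tRel_apply]
  omega

end Transfer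

theorem stmt14 {V₁ V₂ : Type*} [Fintype V₁] [DecidableEq V₁] [Fintype V₂] [DecidableEq V₂]
    (G₁ : SimpleGraph V₁) (G₂ : SimpleGraph V₂) (k₁ k₂ : ℕ)
    (hnk : (Fintype.card V₁ : ℤ) - (k₁ : ℤ) = (Fintype.card V₂ : ℤ) - (k₂ : ℤ))
    (hiso : Nonempty
      ((SimpleGraph.induce {v : V₁ | ¬ IsUniversal G₁ v} G₁) ≃g
       (SimpleGraph.induce {v : V₂ | ¬ IsUniversal G₂ v} G₂))) :
    Nonempty (UpperBell G₁ k₁ ≃g UpperBell G₂ k₂) := by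
  obtain ⟨e⟩ := hiso
  -- the numbers of universal vertices differ the same way as k₁, k₂ do
  have hw : (univ.filter fun v => ¬ IsUniversal G₁ v).card
      = (univ.filter fun v => ¬ IsUniversal G₂ v).card := by
    have h1 : (univ.filter fun v => ¬ IsUniversal G₁ v).card
        = Fintype.card {v : V₁ | ¬ IsUniversal G₁ v} := by
      rw [← Set.toFinset_card, Set.toFinset_setOf]
    have h2 : (univ.filter fun v => ¬ IsUniversal G₂ v).card
        = Fintype.card {v : V₂ | ¬ IsUniversal G₂ v} := by
      rw [← Set.toFinset_card, Set.toFinset_setOf]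
    rw [h1, h2]
    exact Fintype.card_congr e.toEquiv
  have hn1 : uniCard G₁ + (univ.filter fun v => ¬ IsUniversal G₁ v).card
      = Fintype.card V₁ := by
    rw [uniCard, Finset.card_filter_add_card_filter_not, card_univ]
  have hn2 : uniCard G₂ + (univ.filter fun v => ¬ IsUniversal G₂ v).card
      = Fintype.card V₂ := by
    rw [uniCard, Finset.card_filter_add_card_filter_not, card_univ]
  have hk : (k₁ : ℤ) - uniCard G₁ = (k₂ : ℤ) - uniCard G₂ := by omega
  have hcard : ∀ (P : Finpartition (univ : Finset V₁)), IsISP G₁ P →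
      (k₁ ≤ P.parts.card ↔ k₂ ≤ (transfer e P).parts.card) := by
    intro P hP
    have := transfer_parts_card e P hP
    omega
  have hsymm_symm : e.symm.symm = e := rfl
  refine ⟨⟨⟨fun P => ⟨transfer e P.1, isISP_transfer e P.1 P.2.1, (hcard P.1 P.2.1).1 P.2.2⟩,
    fun Q => ⟨transfer e.symm Q.1, isISP_transfer e.symm Q.1 Q.2.1, ?_⟩, ?_, ?_⟩, ?_⟩⟩
  · -- card bound for the inverse
    have h := transfer_parts_card e.symm Q.1 Q.2.1
    have := Q.2.2
    omega
  · -- left inverse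
    intro P
    exact Subtype.ext (transfer_transfer e P.1 P.2.1)
  · -- right inverse
    intro Q
    apply Subtype.ext
    have := transfer_transfer e.symm Q.1 Q.2.1
    rwa [hsymm_symm] at this
  · -- map_rel_iff
    intro P Q
    show (∃ y, MovedBy (transfer e P.1) (transfer e Q.1) y) ↔ ∃ x, MovedBy P.1 Q.1 x
    constructor
    · rintro ⟨y, hy⟩
      have := movedBy_transfer e.symm (transfer e P.1)
        (isISP_transfer e P.1 P.2.1) (isISP_transfer e Q.1 Q.2.1) hy
      rwa [transfer_transfer e P.1 P.2.1, transfer_transfer e Q.1 Q.2.1] at this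
    · rintro ⟨x, hx⟩
      exact movedBy_transfer e P.1 P.2.1 Q.2.1 hx
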